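/- Let d ≥ 1, let k₁ < k₂ < ⋯ < k_d be positive integers, set 𝔎 = k₁ + ⋯ + k_d, and let p be an even positive integer. Then there exist constants C₁, C₂ > 0, depending only on d, p, k₁, …, k_d, such that for every positive integer N the following holds: if K ≥ 0 is a constant satisfying (∫_{[0,1]^d} |Σ_{|n|≤N} a_n e^{2πi(α₁ n^{k₁} + ⋯ + α_d n^{k_d})}|^p dα)^{1/p} ≤ K · (Σ_{|n|≤N} |a_n|²)^{1/2} for all complex numbers a_n (|n| ≤ N), then K ≥ max{C₁, C₂ · N^{(1/2)(1 − 2𝔎/p)}}. -/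

import Mathlib

open MeasureTheory

set_option maxHeartbeats 1000000 in
/-- Sharpness: any constant `K` for which the discrete restriction inequality at an
even exponent `p` holds for all coefficients satisfies
`K ≥ max{C₁, C₂ N^{(1/2)(1 - 2𝔎/p)}}`. -/
theorem discrete_restriction_sharpness
    (d : ℕ) (hd : 1 ≤ d) (k : Fin d → ℕ)
    (hmono : StrictMono k) (hpos : 0 < k ⟨0, by omega⟩)
    (p : ℕ) (hp : 0 < p) (hpeven : Even p) :
    ∃ C₁ C₂ : ℝ, 0 < C₁ ∧ 0 < C₂ ∧ ∀ N : ℕ, 0 < N → ∀ K : ℝ, 0 ≤ K →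
      (∀ a : ℤ → ℂ,
        (∫ α in (Set.univ.pi fun _ : Fin d => Set.Icc (0:ℝ) 1),
            ‖∑ n ∈ Finset.Icc (-(N:ℤ)) (N:ℤ), a n *
                Complex.exp (2 * Real.pi * Complex.I *
                  ∑ j : Fin d, (α j : ℂ) * (n : ℂ) ^ (k j))‖ ^ (p : ℝ)) ^ (1 / (p : ℝ))
        ≤ K * (∑ n ∈ Finset.Icc (-(N:ℤ)) (N:ℤ), ‖a n‖ ^ 2) ^ (1/2 : ℝ)) →
      max C₁ (C₂ * (N : ℝ) ^ ((1/2 : ℝ) * (1 - 2 * ((∑ j, k j : ℕ) : ℝ) / (p : ℝ)))) ≤ K := by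
  have hk : ∀ j, 0 < k j := by
    intro j
    have h := hmono.monotone (show (⟨0, by omega⟩ : Fin d) ≤ j from Fin.mk_le_of_le_val (Nat.zero_le _))
    omega
  have hd0 : (0:ℝ) < d := by exact_mod_cast hd
  have hp' : (p:ℝ) ≠ 0 := Nat.cast_ne_zero.mpr hp.ne'
  refine ⟨1, ((8*(d:ℝ))) ^ (-(d:ℝ)/p) / Real.sqrt 3, one_pos, by positivity, ?_⟩
  intro N hN K hK hineq
  have hbox : (Set.univ.pi fun _ : Fin d => Set.Icc (0:ℝ) 1) = Set.Icc (0 : Fin d → ℝ) 1 := by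
    rw [← Set.pi_univ_Icc]; rfl
  have h0mem : (0:ℤ) ∈ Finset.Icc (-(N:ℤ)) (N:ℤ) := by
    rw [Finset.mem_Icc]; omega
  have hcard : (Finset.Icc (-(N:ℤ)) (N:ℤ)).card = 2*N+1 := by
    rw [Int.card_Icc]; omega
  -- Part 1 : 1 ≤ K
  have hK1 : (1:ℝ) ≤ K := by
    have h := hineq (fun n => if n = 0 then 1 else 0)
    have hsum : ∀ α : Fin d → ℝ,
        (∑ n ∈ Finset.Icc (-(N:ℤ)) (N:ℤ), (if n = 0 then (1:ℂ) else 0) *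
          Complex.exp (2 * Real.pi * Complex.I *
            ∑ j : Fin d, (α j : ℂ) * (n : ℂ) ^ (k j))) = 1 := by
      intro α
      rw [Finset.sum_eq_single_of_mem 0 h0mem (by intro b _ hb; simp [hb])]
      have hz : ∀ j : Fin d, (0:ℂ) ^ (k j) = 0 := fun j => zero_pow (hk j).ne'
      simp [hz]
    have hsum2 : (∑ n ∈ Finset.Icc (-(N:ℤ)) (N:ℤ), ‖(if n = 0 then (1:ℂ) else 0)‖ ^ 2) = 1 := by
      rw [Finset.sum_eq_single_of_mem 0 h0mem (by intro b _ hb; simp [hb])]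
      simp
    simp only [hsum, hsum2, norm_one, Real.one_rpow] at h
    rw [hbox] at h
    rw [setIntegral_const, measureReal_def, Real.volume_Icc_pi_toReal (by intro i; norm_num)] at h
    simpa using h
  refine max_le hK1 ?_
  -- Part 2
  set R : ℝ := (N : ℝ) with hRdef
  have hR : (0:ℝ) < R := by rw [hRdef]; exact_mod_cast hN
  have hR1 : (1:ℝ) ≤ R := by rw [hRdef]; exact_mod_cast hN
  set D : ℝ := 8 * d with hDdef
  have hD0 : (0:ℝ) < D := by positivity
  have hd1 : (1:ℝ) ≤ d := by exact_mod_cast hd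
  have hD8 : (8:ℝ) ≤ D := by rw [hDdef]; nlinarith
  set 𝔎 : ℕ := ∑ j, k j with h𝔎
  set δ : Fin d → ℝ := fun j => 1 / (D * R ^ (k j)) with hδdef
  have hδpos : ∀ j, 0 < δ j := fun j => by positivity
  have hδle1 : ∀ j, δ j ≤ 1 := by
    intro j
    rw [hδdef, div_le_one (by positivity)]
    have h1 : (1:ℝ) ≤ R ^ (k j) := one_le_pow₀ hR1
    nlinarith
  set F : (Fin d → ℝ) → ℂ := fun α => ∑ n ∈ Finset.Icc (-(N:ℤ)) (N:ℤ),
      Complex.exp (2 * Real.pi * Complex.I *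
        ∑ j : Fin d, ((α j : ℂ) * (n : ℂ) ^ (k j))) with hFdef
  have hFcont : Continuous F := by
    apply continuous_finset_sum
    intro n _
    apply Complex.continuous_exp.comp
    apply continuous_const.mul
    apply continuous_finset_sum
    intro j _
    exact (Complex.continuous_ofReal.comp (continuous_apply j)).mul continuous_const
  -- pointwise lower bound on the small box
  have hFlow : ∀ α ∈ Set.Icc (0:Fin d → ℝ) δ, R ≤ ‖F α‖ := by
    intro α hα
    obtain ⟨hα0, hαδ⟩ := hα
    have key : ∀ n ∈ Finset.Icc (-(N:ℤ)) (N:ℤ),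
        (1/2 : ℝ) ≤ (Complex.exp (2 * Real.pi * Complex.I *
          ∑ j : Fin d, ((α j : ℂ) * (n : ℂ) ^ (k j)))).re := by
      intro n hn
      set t : ℝ := ∑ j, α j * (n:ℝ) ^ (k j) with ht
      have hcast : 2 * Real.pi * Complex.I *
          ∑ j : Fin d, ((α j : ℂ) * (n : ℂ) ^ (k j))
          = ((2 * Real.pi * t : ℝ) : ℂ) * Complex.I := by
        rw [ht]
        push_cast
        ring
      rw [hcast, Complex.exp_ofReal_mul_I_re]
      have hnR : |(n:ℝ)| ≤ R := by
        rw [Finset.mem_Icc] at hn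
        rw [abs_le, hRdef]
        constructor <;> [exact_mod_cast hn.1; exact_mod_cast hn.2]
      have htabs : |t| ≤ 1/8 := by
        calc |t| ≤ ∑ j, |α j * (n:ℝ) ^ (k j)| := Finset.abs_sum_le_sum_abs _ _
          _ ≤ ∑ _j : Fin d, 1 / D := by
              apply Finset.sum_le_sum
              intro j _
              rw [abs_mul, abs_pow]
              have h1 : |α j| ≤ δ j := by rw [abs_of_nonneg (hα0 j)]; exact hαδ j
              have h2 : |(n:ℝ)| ^ (k j) ≤ R ^ (k j) :=
                pow_le_pow_left₀ (abs_nonneg _) hnR _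
              have h3 : δ j * R ^ (k j) = 1 / D := by
                rw [hδdef]
                field_simp
              calc |α j| * |(n:ℝ)| ^ (k j) ≤ δ j * R ^ (k j) :=
                    mul_le_mul h1 h2 (by positivity) (hδpos j).le
                _ = 1 / D := h3
          _ = d * (1/D) := by rw [Finset.sum_const, Finset.card_univ, Fintype.card_fin, nsmul_eq_mul]
          _ ≤ 1/8 := by
              rw [hDdef, show (d:ℝ) * (1/(8*(d:ℝ))) = 1/8 from by
                rw [mul_one_div, div_eq_div_iff (by positivity) (by norm_num)]; ring]
      have h2pt : |2 * Real.pi * t| ≤ 1 := by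
        rw [abs_mul, abs_of_pos (by positivity : (0:ℝ) < 2 * Real.pi)]
        nlinarith [Real.pi_le_four, Real.pi_pos, abs_nonneg t]
      have hcos := Real.one_sub_sq_div_two_le_cos (x := 2 * Real.pi * t)
      nlinarith [sq_abs (2 * Real.pi * t), abs_nonneg (2 * Real.pi * t)]
    have hre : R ≤ (F α).re := by
      simp only [hFdef, Complex.re_sum]
      have hle := Finset.card_nsmul_le_sum (Finset.Icc (-(N:ℤ)) (N:ℤ)) _ _ key
      rw [hcard, nsmul_eq_mul] at hle
      refine le_trans ?_ hle
      push_cast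
      linarith
    calc R ≤ (F α).re := hre
      _ ≤ |(F α).re| := le_abs_self _
      _ ≤ ‖F α‖ := Complex.abs_re_le_norm _
  -- integral estimates
  have hBsub : Set.Icc (0:Fin d → ℝ) δ ⊆ Set.Icc 0 1 :=
    Set.Icc_subset_Icc le_rfl (fun j => hδle1 j)
  have hint : IntegrableOn (fun α => ‖F α‖ ^ p) (Set.Icc (0:Fin d → ℝ) 1) volume :=
    (hFcont.norm.pow p).continuousOn.integrableOn_compact isCompact_Icc
  have hvolB : (volume (Set.Icc (0:Fin d → ℝ) δ)).toReal = ∏ j, δ j := by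
    have := Real.volume_Icc_pi_toReal (a := (0:Fin d → ℝ)) (b := δ) (fun i => (hδpos i).le)
    simpa using this
  have hIB : R ^ p * (∏ j, δ j) ≤ ∫ α in Set.Icc (0:Fin d → ℝ) δ, ‖F α‖ ^ p := by
    have hc : ∫ _α in Set.Icc (0:Fin d → ℝ) δ, (R ^ p) ∂volume
        = (volume (Set.Icc (0:Fin d → ℝ) δ)).toReal * R ^ p := by
      rw [setIntegral_const, smul_eq_mul, measureReal_def]
    calc R ^ p * (∏ j, δ j) = (volume (Set.Icc (0:Fin d → ℝ) δ)).toReal * R ^ p := by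
          rw [hvolB]; ring
      _ = ∫ _α in Set.Icc (0:Fin d → ℝ) δ, (R ^ p) ∂volume := hc.symm
      _ ≤ ∫ α in Set.Icc (0:Fin d → ℝ) δ, ‖F α‖ ^ p := by
          apply setIntegral_mono_on (continuousOn_const.integrableOn_compact isCompact_Icc)
            (hint.mono_set hBsub) measurableSet_Icc
          intro x hx
          exact pow_le_pow_left₀ hR.le (hFlow x hx) p
  have hIfull : (∫ α in Set.Icc (0:Fin d → ℝ) δ, ‖F α‖ ^ p)
      ≤ ∫ α in Set.Icc (0:Fin d → ℝ) 1, ‖F α‖ ^ p :=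
    setIntegral_mono_set hint
      (Filter.Eventually.of_forall (fun x => by positivity))
      (Filter.Eventually.of_forall hBsub)
  -- product of δ
  have hprod : (∏ j, δ j) = (D ^ d * R ^ 𝔎)⁻¹ := by
    rw [hδdef]
    simp only [one_div]
    rw [Finset.prod_inv_distrib]
    congr 1
    rw [Finset.prod_mul_distrib, Finset.prod_const, Finset.card_univ, Fintype.card_fin,
      Finset.prod_pow_eq_pow_sum]
  -- rpow algebra
  set X : ℝ := D ^ (-(d:ℝ)/p) * R ^ ((1:ℝ) - 𝔎/p) with hXdef
  have hX0 : 0 < X := by positivity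
  have hXpow : X ^ p = R ^ p * (D ^ d * R ^ 𝔎)⁻¹ := by
    rw [← Real.rpow_natCast X p, hXdef]
    rw [Real.mul_rpow (by positivity) (by positivity)]
    rw [← Real.rpow_mul hD0.le, ← Real.rpow_mul hR.le]
    have e1 : (-(d:ℝ)/p) * p = -(d:ℝ) := by field_simp
    have e2 : ((1:ℝ) - 𝔎/p) * p = (p:ℝ) - 𝔎 := by field_simp
    rw [e1, e2, Real.rpow_neg hD0.le, Real.rpow_sub hR, div_eq_mul_inv]
    rw [Real.rpow_natCast, Real.rpow_natCast, Real.rpow_natCast, mul_inv]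
    ring
  -- use the hypothesis with constant coefficients 1
  have h2 := hineq (fun _ => 1)
  simp only [one_mul, norm_one, one_pow, Finset.sum_const, hcard, nsmul_eq_mul, mul_one] at h2
  rw [hbox] at h2
  simp only [Real.rpow_natCast] at h2
  have hXle : X ≤ K * ((2*N+1 : ℕ) : ℝ) ^ ((1:ℝ)/2) := by
    have hA : (R ^ p * (D ^ d * R ^ 𝔎)⁻¹) ^ ((1:ℝ)/p) = X := by
      rw [← hXpow, one_div, Real.pow_rpow_inv_natCast hX0.le hp.ne']
    calc X = (R ^ p * (D ^ d * R ^ 𝔎)⁻¹) ^ ((1:ℝ)/p) := hA.symm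
      _ ≤ (∫ α in Set.Icc (0:Fin d → ℝ) 1, ‖F α‖ ^ p) ^ ((1:ℝ)/p) := by
          apply Real.rpow_le_rpow (by positivity) ?_ (by positivity)
          rw [← hprod]
          exact hIB.trans hIfull
      _ ≤ K * ((2*N+1 : ℕ) : ℝ) ^ ((1:ℝ)/2) := by
          exact h2
  -- final arithmetic
  have hsqrt3 : (0:ℝ) < Real.sqrt 3 := Real.sqrt_pos.mpr (by norm_num)
  set e : ℝ := (1/2 : ℝ) * (1 - 2 * (𝔎:ℝ) / p) with hedef
  have hcount : ((2*N+1 : ℕ) : ℝ) ^ ((1:ℝ)/2) ≤ Real.sqrt 3 * R ^ ((1:ℝ)/2) := by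
    rw [Real.sqrt_eq_rpow, show ((1:ℝ)/2) = (1/2:ℝ) from rfl, ← Real.mul_rpow (by norm_num) hR.le]
    apply Real.rpow_le_rpow (by positivity) ?_ (by norm_num)
    push_cast
    nlinarith
  have hmain : D ^ (-(d:ℝ)/p) / Real.sqrt 3 * R ^ e * ((2*N+1 : ℕ) : ℝ) ^ ((1:ℝ)/2) ≤ X := by
    calc D ^ (-(d:ℝ)/p) / Real.sqrt 3 * R ^ e * ((2*N+1 : ℕ) : ℝ) ^ ((1:ℝ)/2)
        ≤ D ^ (-(d:ℝ)/p) / Real.sqrt 3 * R ^ e * (Real.sqrt 3 * R ^ ((1:ℝ)/2)) := by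
          apply mul_le_mul_of_nonneg_left hcount (by positivity)
      _ = D ^ (-(d:ℝ)/p) * (R ^ e * R ^ ((1:ℝ)/2)) := by
          have hs : Real.sqrt 3 ≠ 0 := hsqrt3.ne'
          calc D ^ (-(d:ℝ)/p) / Real.sqrt 3 * R ^ e * (Real.sqrt 3 * R ^ ((1:ℝ)/2))
              = D ^ (-(d:ℝ)/p) * R ^ e * R ^ ((1:ℝ)/2) * ((Real.sqrt 3)⁻¹ * Real.sqrt 3) := by
                rw [div_eq_mul_inv]; ring
            _ = D ^ (-(d:ℝ)/p) * (R ^ e * R ^ ((1:ℝ)/2)) := by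
                rw [inv_mul_cancel₀ hs]; ring
      _ = X := by
          rw [← Real.rpow_add hR, hXdef]
          congr 1
          rw [hedef]
          ring
  have hden : (0:ℝ) < ((2*N+1 : ℕ) : ℝ) ^ ((1:ℝ)/2) :=
    Real.rpow_pos_of_pos (Nat.cast_pos.mpr (by omega)) _
  exact le_of_mul_le_mul_right (hmain.trans hXle) hden
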